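/- arXiv:1604.05424 — 4 statements merged into one kernel-verified Lean document; each statement's English description precedes it below -/
import Mathlib

section
/- Let a torsion-free affine connection on an open set U ⊆ ℝⁿ be given by smooth Christoffel symbols, let p ∈ U, and suppose the connection is affine Szabó at p, i.e. the characteristic polynomial of the affine Szabó operator S(X) equals λⁿ for every X ∈ ℝⁿ. Then the Ricci tensor of the connection is cyclic parallel at p, i.e. (∇ᵢRic)ⱼₖ + (∇ⱼRic)ₖᵢ + (∇ₖRic)ᵢⱼ = 0 at p for all indices i, j, k. -/
open scoped BigOperators

noncomputable section

variable {ι : Type} [Fintype ι] [DecidableEq ι]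

/-- Partial derivative in the `i`-th coordinate direction. -/
def pd (i : ι) (f : (ι → ℝ) → ℝ) : (ι → ℝ) → ℝ :=
  fun p => fderiv ℝ f p (Pi.single i 1)

/-- Curvature components `R^l_{ijk}` of the torsion-free connection with Christoffel
symbols `Γ k i j = Γᵏᵢⱼ`:
`Rˡᵢⱼₖ = ∂ᵢΓˡⱼₖ − ∂ⱼΓˡᵢₖ + Σₘ (Γˡᵢₘ Γᵐⱼₖ − Γˡⱼₘ Γᵐᵢₖ)`. -/
def curv (Γ : ι → ι → ι → (ι → ℝ) → ℝ) (l i j k : ι) : (ι → ℝ) → ℝ :=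
  fun p => pd i (Γ l j k) p - pd j (Γ l i k) p +
    ∑ m, (Γ l i m p * Γ m j k p - Γ l j m p * Γ m i k p)

/-- Components `(∇ₕR)ˡᵢⱼₖ` of the covariant derivative of the curvature. -/
def covR (Γ : ι → ι → ι → (ι → ℝ) → ℝ) (h l i j k : ι) : (ι → ℝ) → ℝ :=
  fun p => pd h (curv Γ l i j k) p +
    ∑ m, (Γ l h m p * curv Γ m i j k p - Γ m h i p * curv Γ l m j k p
      - Γ m h j p * curv Γ l i m k p - Γ m h k p * curv Γ l i j m p)

/-- The Szabó operator `S(X) : Y ↦ (∇_X R)(Y,X)X` at the point `p`, as a matrix: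
`(S(X)Y)ˡ = Σ_{h,i,j,k} Xʰ Yⁱ Xʲ Xᵏ (∇ₕR)ˡᵢⱼₖ`. -/
def szabo (Γ : ι → ι → ι → (ι → ℝ) → ℝ) (p X : ι → ℝ) : Matrix ι ι ℝ :=
  Matrix.of fun l i => ∑ h, ∑ j, ∑ k, X h * X j * X k * covR Γ h l i j k p

/-- Ricci tensor `Ricⱼₖ = Σᵢ Rⁱᵢⱼₖ`. -/
def ricci (Γ : ι → ι → ι → (ι → ℝ) → ℝ) (j k : ι) : (ι → ℝ) → ℝ :=
  fun p => ∑ i, curv Γ i i j k p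

/-- Covariant derivative of the Ricci tensor,
`(∇ᵢRic)ⱼₖ = ∂ᵢRicⱼₖ − Σₘ (Γᵐᵢⱼ Ricₘₖ + Γᵐᵢₖ Ricⱼₘ)`. -/
def covRic (Γ : ι → ι → ι → (ι → ℝ) → ℝ) (i j k : ι) : (ι → ℝ) → ℝ :=
  fun p => pd i (ricci Γ j k) p -
    ∑ m, (Γ m i j p * ricci Γ m k p + Γ m i k p * ricci Γ j m p)

/-- The Ricci tensor is cyclic parallel at `p`. -/
def CyclicParallelAt (Γ : ι → ι → ι → (ι → ℝ) → ℝ) (p : ι → ℝ) : Prop :=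
  ∀ i j k, covRic Γ i j k p + covRic Γ j k i p + covRic Γ k i j p = 0

/-- Christoffel symbols `Γ̃ᶜₐᵦ = ½ Σ_d g̃ᶜᵈ (∂ₐ g̃ᵦ_d + ∂ᵦ g̃ₐ_d − ∂_d g̃ₐᵦ)` of the
Levi-Civita connection of a pseudo-Riemannian metric `g`. -/
def christoffel (g : (ι → ℝ) → Matrix ι ι ℝ) (c a b : ι) : (ι → ℝ) → ℝ :=
  fun p => (1 / 2) * ∑ d, (g p)⁻¹ c d *
    (pd a (fun q => g q b d) p + pd b (fun q => g q a d) p - pd d (fun q => g q a b) p)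

end

noncomputable section Aux

variable {ι : Type} [Fintype ι] [DecidableEq ι]

lemma contDiffAt_pd {f : (ι → ℝ) → ℝ} {p : ι → ℝ} (hf : ContDiffAt ℝ (⊤ : ℕ∞) f p) (i : ι) :
    ContDiffAt ℝ (⊤ : ℕ∞) (pd i f) p := by
  have h1 : ContDiffAt ℝ (⊤ : ℕ∞) (fderiv ℝ f) p := hf.fderiv_right (by norm_cast)
  exact ((ContinuousLinearMap.apply ℝ ℝ (Pi.single i 1)).contDiff.contDiffAt).comp p h1

lemma pd_comm {f : (ι → ℝ) → ℝ} {p : ι → ℝ} (hf : ContDiffAt ℝ (⊤ : ℕ∞) f p) (i j : ι) :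
    pd i (pd j f) p = pd j (pd i f) p := by
  have hsymm : IsSymmSndFDerivAt ℝ f p := hf.isSymmSndFDerivAt (by rw [minSmoothness_of_isRCLikeNormedField]; exact WithTop.coe_le_coe.mpr (le_top : (2 : ℕ∞) ≤ ⊤))
  have h1 : ContDiffAt ℝ (⊤ : ℕ∞) (fderiv ℝ f) p := hf.fderiv_right (by norm_cast)
  have hd : DifferentiableAt ℝ (fderiv ℝ f) p := h1.differentiableAt (by norm_cast)
  have key : ∀ v w : ι → ℝ, fderiv ℝ (fun q => fderiv ℝ f q v) p w
      = fderiv ℝ (fderiv ℝ f) p w v := by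
    intro v w
    have : fderiv ℝ (fun q => fderiv ℝ f q v) p = (fderiv ℝ (fderiv ℝ f) p).flip v := by
      have := fderiv_clm_apply (c := fderiv ℝ f) (u := fun _ => v) hd (differentiableAt_const v)
      simpa using this
    rw [this]; rfl
  show fderiv ℝ (fun q => fderiv ℝ f q (Pi.single j 1)) p (Pi.single i 1) = _
  rw [key, hsymm (Pi.single i 1) (Pi.single j 1), ← key]; rfl

lemma pd_sub {f g : (ι → ℝ) → ℝ} {p : ι → ℝ} (hf : DifferentiableAt ℝ f p)
    (hg : DifferentiableAt ℝ g p) (i : ι) :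
    pd i (fun q => f q - g q) p = pd i f p - pd i g p := by
  simp [pd, fderiv_fun_sub hf hg]

lemma pd_sum {α : Type*} [Fintype α] {f : α → (ι → ℝ) → ℝ} {p : ι → ℝ}
    (hf : ∀ l, DifferentiableAt ℝ (f l) p) (i : ι) :
    pd i (fun q => ∑ l, f l q) p = ∑ l, pd i (f l) p := by
  simp [pd, fderiv_fun_sum (fun l _ => hf l)]

lemma contDiffAt_curv {Γ : ι → ι → ι → (ι → ℝ) → ℝ} {p : ι → ℝ}
    (hΓ : ∀ a b c, ContDiffAt ℝ (⊤ : ℕ∞) (Γ a b c) p) (l i j k : ι) :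
    ContDiffAt ℝ (⊤ : ℕ∞) (curv Γ l i j k) p := by
  unfold curv
  apply ContDiffAt.add
  · exact (contDiffAt_pd (hΓ l j k) i).sub (contDiffAt_pd (hΓ l i k) j)
  · exact ContDiffAt.sum fun m _ => ((hΓ l i m).mul (hΓ m j k)).sub ((hΓ l j m).mul (hΓ m i k))

lemma differentiableAt_ricci {Γ : ι → ι → ι → (ι → ℝ) → ℝ} {p : ι → ℝ}
    (hΓ : ∀ a b c, ContDiffAt ℝ (⊤ : ℕ∞) (Γ a b c) p) (j k : ι) :
    DifferentiableAt ℝ (ricci Γ j k) p := by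
  unfold ricci
  exact (ContDiffAt.sum fun l _ => contDiffAt_curv hΓ l l j k).differentiableAt
    (by norm_cast)

lemma contract {Γ : ι → ι → ι → (ι → ℝ) → ℝ} {p : ι → ℝ}
    (hΓ : ∀ a b c, ContDiffAt ℝ (⊤ : ℕ∞) (Γ a b c) p) (h j k : ι) :
    ∑ l, covR Γ h l l j k p = covRic Γ h j k p := by
  have hdR : ∀ l i j k, DifferentiableAt ℝ (curv Γ l i j k) p := fun l i j k =>
    (contDiffAt_curv hΓ l i j k).differentiableAt (by norm_cast)
  have e1 : ∑ l, pd h (curv Γ l l j k) p = pd h (ricci Γ j k) p :=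
    (pd_sum (fun l => hdR l l j k) h).symm
  have swap1 : (∑ l, ∑ m, Γ l h m p * curv Γ m l j k p)
      = ∑ l, ∑ m, Γ m h l p * curv Γ l m j k p := Finset.sum_comm
  have ec : ∑ l, ∑ m, Γ m h j p * curv Γ l l m k p = ∑ m, Γ m h j p * ricci Γ m k p := by
    rw [Finset.sum_comm]
    exact Finset.sum_congr rfl fun m _ => by rw [← Finset.mul_sum]; rfl
  have ed : ∑ l, ∑ m, Γ m h k p * curv Γ l l j m p = ∑ m, Γ m h k p * ricci Γ j m p := by
    rw [Finset.sum_comm]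
    exact Finset.sum_congr rfl fun m _ => by rw [← Finset.mul_sum]; rfl
  simp only [covR, covRic, Finset.sum_sub_distrib, Finset.sum_add_distrib]
  rw [e1, swap1, ec, ed]
  ring

lemma cubic_polarize {C : ι → ι → ι → ℝ}
    (h : ∀ X : ι → ℝ, ∑ a, ∑ b, ∑ c, X a * X b * X c * C a b c = 0) (i j k : ι) :
    C i j k + C i k j + C j i k + C j k i + C k i j + C k j i = 0 := by
  set T : (ι → ℝ) → (ι → ℝ) → (ι → ℝ) → ℝ :=
    fun x y z => ∑ a, ∑ b, ∑ c, x a * y b * z c * C a b c with hT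
  have Tadd1 : ∀ x y z w : ι → ℝ, T (x + y) z w = T x z w + T y z w := by
    intro x y z w
    simp [hT, Pi.add_apply, add_mul, Finset.sum_add_distrib]
  have Tadd2 : ∀ x y z w : ι → ℝ, T x (y + z) w = T x y w + T x z w := by
    intro x y z w
    simp [hT, Pi.add_apply, add_mul, mul_add, Finset.sum_add_distrib]
  have Tadd3 : ∀ x y z w : ι → ℝ, T x y (z + w) = T x y z + T x y w := by
    intro x y z w
    simp [hT, Pi.add_apply, add_mul, mul_add, Finset.sum_add_distrib]
  have key : ∀ x y z : ι → ℝ,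
      T x y z + T x z y + T y x z + T y z x + T z x y + T z y x
        = T (x + y + z) (x + y + z) (x + y + z) - T (x + y) (x + y) (x + y)
          - T (x + z) (x + z) (x + z) - T (y + z) (y + z) (y + z)
          + T x x x + T y y y + T z z z := by
    intro x y z
    simp only [Tadd1, Tadd2, Tadd3]
    ring
  have Tsingle : ∀ a b c : ι, T (Pi.single a 1) (Pi.single b 1) (Pi.single c 1) = C a b c := by
    intro a b c
    simp [hT, Pi.single_apply, ite_mul, Finset.sum_ite_eq']
  have hdiag : ∀ X : ι → ℝ, T X X X = 0 := fun X => h X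
  have := key (Pi.single i 1) (Pi.single j 1) (Pi.single k 1)
  simp only [hdiag] at this
  simp only [Tsingle] at this
  simpa using this

lemma ricci_antisym {Γ : ι → ι → ι → (ι → ℝ) → ℝ}
    (hsym : ∀ a b c, Γ a b c = Γ a c b) (j k : ι) (q : ι → ℝ) :
    ricci Γ j k q - ricci Γ k j q = ∑ l, (pd k (Γ l l j) q - pd j (Γ l l k) q) := by
  have cancel : ∑ l, ∑ m, Γ l k m q * Γ m l j q = ∑ l, ∑ m, Γ l j m q * Γ m l k q := by
    rw [Finset.sum_comm]
    refine Finset.sum_congr rfl fun l _ => Finset.sum_congr rfl fun m _ => ?_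
    rw [hsym m k l, hsym l m j]; ring
  calc ricci Γ j k q - ricci Γ k j q
      = ∑ l, (curv Γ l l j k q - curv Γ l l k j q) := by
        simp only [ricci, Finset.sum_sub_distrib]
    _ = ∑ l, ((pd k (Γ l l j) q - pd j (Γ l l k) q)
          + ∑ m, (Γ l k m q * Γ m l j q - Γ l j m q * Γ m l k q)) := by
        refine Finset.sum_congr rfl fun l _ => ?_
        simp only [curv]
        rw [hsym l j k]
        have e : ∑ m, (Γ l l m q * Γ m j k q - Γ l j m q * Γ m l k q)
            - ∑ m, (Γ l l m q * Γ m k j q - Γ l k m q * Γ m l j q)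
            = ∑ m, (Γ l k m q * Γ m l j q - Γ l j m q * Γ m l k q) := by
          rw [← Finset.sum_sub_distrib]
          refine Finset.sum_congr rfl fun m _ => ?_
          rw [hsym m j k]; ring
        linear_combination e
    _ = ∑ l, (pd k (Γ l l j) q - pd j (Γ l l k) q)
          + ∑ l, ∑ m, (Γ l k m q * Γ m l j q - Γ l j m q * Γ m l k q) := by
        rw [Finset.sum_add_distrib]
    _ = ∑ l, (pd k (Γ l l j) q - pd j (Γ l l k) q) := by
        simp only [Finset.sum_sub_distrib]
        rw [cancel, sub_self, add_zero]

end Aux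

/-- if a torsion-free affine connection on an open set `U ⊆ ℝⁿ` with smooth
Christoffel symbols is affine Szabó at `p ∈ U` (the characteristic polynomial of the affine
Szabó operator `S(X)` is `λⁿ` for every `X`), then its Ricci tensor is cyclic parallel at `p`. -/
theorem stmt_1 (n : ℕ) (U : Set (Fin n → ℝ)) (hU : IsOpen U)
    (Γ : Fin n → Fin n → Fin n → (Fin n → ℝ) → ℝ)
    (hsmooth : ∀ k i j, ContDiffOn ℝ (⊤ : ℕ∞) (Γ k i j) U)
    (hsym : ∀ k i j, Γ k i j = Γ k j i)
    (p : Fin n → ℝ) (hp : p ∈ U)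
    (hszabo : ∀ X : Fin n → ℝ, (szabo Γ p X).charpoly = Polynomial.X ^ n) :
    CyclicParallelAt Γ p := by
  intro i j k
  rcases Nat.eq_zero_or_pos n with hn | hn
  · subst hn; exact i.elim0
  have : Nonempty (Fin n) := ⟨⟨0, hn⟩⟩
  have hΓ : ∀ a b c, ContDiffAt ℝ (⊤ : ℕ∞) (Γ a b c) p := fun a b c =>
    (hsmooth a b c).contDiffAt (hU.mem_nhds hp)
  -- trace of the Szabó operator vanishes, yielding a vanishing cubic form in `covRic`
  have hcube : ∀ X : Fin n → ℝ,
      ∑ a, ∑ b, ∑ c, X a * X b * X c * covRic Γ a b c p = 0 := by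
    intro X
    have t0 : (szabo Γ p X).trace = 0 := by
      rw [Matrix.trace_eq_neg_charpoly_coeff, hszabo X, Polynomial.coeff_X_pow]
      simp only [Fintype.card_fin]
      rw [if_neg (by omega)]
      simp
    have expand : (szabo Γ p X).trace
        = ∑ a, ∑ b, ∑ c, X a * X b * X c * covRic Γ a b c p := by
      simp only [Matrix.trace, Matrix.diag, szabo, Matrix.of_apply]
      rw [Finset.sum_comm]
      refine Finset.sum_congr rfl fun a _ => ?_
      rw [Finset.sum_comm]
      refine Finset.sum_congr rfl fun b _ => ?_
      rw [Finset.sum_comm]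
      refine Finset.sum_congr rfl fun c _ => ?_
      rw [← Finset.mul_sum, contract hΓ a b c]
    rw [← expand]; exact t0
  have hS6 := cubic_polarize hcube i j k
  -- the difference of the two cyclic sums vanishes (Schwarz + symmetry of Γ)
  have hdpd : ∀ (l a b : Fin n), DifferentiableAt ℝ (pd b (Γ l l a)) p := fun l a b =>
    (contDiffAt_pd (hΓ l l a) b).differentiableAt (by norm_cast)
  have hsym' : ∀ a b c, Γ a b c = Γ a c b := fun a b c => hsym a b c
  have hpdA : ∀ a b c : Fin n, pd a (fun q => ricci Γ b c q - ricci Γ c b q) p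
      = ∑ l, (pd a (pd c (Γ l l b)) p - pd a (pd b (Γ l l c)) p) := by
    intro a b c
    rw [show (fun q => ricci Γ b c q - ricci Γ c b q)
        = fun q => ∑ l, (pd c (Γ l l b) q - pd b (Γ l l c) q) from
      funext fun q => ricci_antisym hsym' b c q]
    rw [pd_sum (f := fun l q => pd c (Γ l l b) q - pd b (Γ l l c) q) (fun l => (hdpd l b c).sub (hdpd l c b)) a]
    exact Finset.sum_congr rfl fun l _ => pd_sub (hdpd l b c) (hdpd l c b) a
  have schwarz : ∀ a b c : Fin n,
      pd a (fun q => ricci Γ b c q - ricci Γ c b q) p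
      + pd b (fun q => ricci Γ c a q - ricci Γ a c q) p
      + pd c (fun q => ricci Γ a b q - ricci Γ b a q) p = 0 := by
    intro a b c
    rw [hpdA a b c, hpdA b c a, hpdA c a b, ← Finset.sum_add_distrib,
      ← Finset.sum_add_distrib]
    apply Finset.sum_eq_zero; intro l _
    rw [pd_comm (hΓ l l b) a c, pd_comm (hΓ l l c) a b, pd_comm (hΓ l l a) b c]
    ring
  have hdric : ∀ b c : Fin n, DifferentiableAt ℝ (ricci Γ b c) p := fun b c =>
    differentiableAt_ricci hΓ b c
  have hdiffRic : ∀ a b c : Fin n, covRic Γ a b c p - covRic Γ a c b p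
      = pd a (fun q => ricci Γ b c q - ricci Γ c b q) p
        - ∑ m, (Γ m a b p * (ricci Γ m c p - ricci Γ c m p)
          + Γ m a c p * (ricci Γ b m p - ricci Γ m b p)) := by
    intro a b c
    simp only [covRic]
    rw [pd_sub (hdric b c) (hdric c b) a]
    have e : (∑ m, (Γ m a b p * ricci Γ m c p + Γ m a c p * ricci Γ b m p))
        - ∑ m, (Γ m a c p * ricci Γ m b p + Γ m a b p * ricci Γ c m p)
        = ∑ m, (Γ m a b p * (ricci Γ m c p - ricci Γ c m p)
          + Γ m a c p * (ricci Γ b m p - ricci Γ m b p)) := by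
      rw [← Finset.sum_sub_distrib]
      exact Finset.sum_congr rfl fun m _ => by ring
    linear_combination -e
  have hGcancel : ∑ m, (Γ m i j p * (ricci Γ m k p - ricci Γ k m p)
        + Γ m i k p * (ricci Γ j m p - ricci Γ m j p))
      + ∑ m, (Γ m j k p * (ricci Γ m i p - ricci Γ i m p)
        + Γ m j i p * (ricci Γ k m p - ricci Γ m k p))
      + ∑ m, (Γ m k i p * (ricci Γ m j p - ricci Γ j m p)
        + Γ m k j p * (ricci Γ i m p - ricci Γ m i p)) = 0 := by
    rw [← Finset.sum_add_distrib, ← Finset.sum_add_distrib]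
    apply Finset.sum_eq_zero; intro m _
    rw [hsym m j i, hsym m k i, hsym m k j]
    ring
  have hcyc2 : (covRic Γ i j k p + covRic Γ j k i p + covRic Γ k i j p)
      - (covRic Γ i k j p + covRic Γ j i k p + covRic Γ k j i p) = 0 := by
    have d1 := hdiffRic i j k
    have d2 := hdiffRic j k i
    have d3 := hdiffRic k i j
    have s := schwarz i j k
    linear_combination d1 + d2 + d3 + s - hGcancel
  linear_combination hS6 / 2 + hcyc2 / 2
end

section
/- Let a torsion-free affine connection on an open set U ⊆ ℝ² be given by smooth Christoffel symbols and let p ∈ U. Then the characteristic polynomial of the affine Szabó operator S(X) equals λ² for every X ∈ ℝ² (i.e. the connection is affine Szabó at p) if and only if the Ricci tensor is cyclic parallel at p, i.e. (∇ᵢRic)ⱼₖ + (∇ⱼRic)ₖᵢ + (∇ₖRic)ᵢⱼ = 0 at p for all indices i, j, k (i.e. (U,∇) is an L₃-space at p). -/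
open scoped BigOperators

section AuxProof

open Polynomial Matrix

private lemma my_charpoly_fin_two (M : Matrix (Fin 2) (Fin 2) ℝ) :
    M.charpoly = X ^ 2 - C M.trace * X + C M.det := by
  rw [Matrix.charpoly, Matrix.det_fin_two]
  rw [charmatrix_apply_eq, charmatrix_apply_eq,
    charmatrix_apply_ne _ _ _ (by decide), charmatrix_apply_ne _ _ _ (by decide)]
  rw [Matrix.trace_fin_two, Matrix.det_fin_two]
  simp only [map_add, map_sub, _root_.map_mul]
  ring

private lemma curv_swap (Γ : Fin 2 → Fin 2 → Fin 2 → (Fin 2 → ℝ) → ℝ) (l i j k : Fin 2) :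
    curv Γ l j i k = fun q => -(curv Γ l i j k q) := by
  funext q
  simp only [curv, Finset.sum_sub_distrib]
  ring

private lemma pd_curv_swap (Γ : Fin 2 → Fin 2 → Fin 2 → (Fin 2 → ℝ) → ℝ)
    (h l i j k : Fin 2) (p : Fin 2 → ℝ) :
    pd h (curv Γ l j i k) p = -(pd h (curv Γ l i j k) p) := by
  unfold pd
  rw [curv_swap, fderiv_fun_neg]
  simp

private lemma curv_swap_apply (Γ : Fin 2 → Fin 2 → Fin 2 → (Fin 2 → ℝ) → ℝ)
    (l i j k : Fin 2) (q : Fin 2 → ℝ) :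
    curv Γ l j i k q = -(curv Γ l i j k q) := by
  rw [curv_swap]

private lemma covR_antisym (Γ : Fin 2 → Fin 2 → Fin 2 → (Fin 2 → ℝ) → ℝ)
    (h l i j k : Fin 2) (p : Fin 2 → ℝ) :
    covR Γ h l i j k p + covR Γ h l j i k p = 0 := by
  simp only [covR, Fin.sum_univ_two]
  have hs : ∀ a b c d : Fin 2, curv Γ a c b d p = -(curv Γ a b c d p) :=
    fun a b c d => curv_swap_apply Γ a b c d p
  linear_combination pd_curv_swap Γ h l i j k p
    + Γ l h 0 p * hs 0 i j k + Γ l h 1 p * hs 1 i j k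
    - Γ 0 h j p * hs l i 0 k - Γ 1 h j p * hs l i 1 k
    - Γ 0 h i p * hs l 0 j k - Γ 1 h i p * hs l 1 j k
    - Γ 0 h k p * hs l i j 0 - Γ 1 h k p * hs l i j 1

private lemma szabo_mulVec (Γ : Fin 2 → Fin 2 → Fin 2 → (Fin 2 → ℝ) → ℝ)
    (p X : Fin 2 → ℝ) : (szabo Γ p X).mulVec X = 0 := by
  funext l
  have hA : ∀ h i j k : Fin 2, covR Γ h l i j k p + covR Γ h l j i k p = 0 :=
    fun h i j k => covR_antisym Γ h l i j k p
  simp only [Matrix.mulVec, dotProduct, szabo, Matrix.of_apply, Fin.sum_univ_two,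
    Pi.zero_apply]
  linear_combination
      (X 0 * X 0 * X 0 * X 0 / 2) * hA 0 0 0 0
    + (X 0 * X 0 * X 0 * X 1 / 2) * hA 0 0 0 1
    + (X 1 * X 0 * X 0 * X 0 / 2) * hA 1 0 0 0
    + (X 1 * X 0 * X 0 * X 1 / 2) * hA 1 0 0 1
    + (X 0 * X 1 * X 1 * X 0 / 2) * hA 0 1 1 0
    + (X 0 * X 1 * X 1 * X 1 / 2) * hA 0 1 1 1
    + (X 1 * X 1 * X 1 * X 0 / 2) * hA 1 1 1 0
    + (X 1 * X 1 * X 1 * X 1 / 2) * hA 1 1 1 1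
    + (X 0 * X 0 * X 1 * X 0) * hA 0 0 1 0
    + (X 0 * X 0 * X 1 * X 1) * hA 0 0 1 1
    + (X 1 * X 0 * X 1 * X 0) * hA 1 0 1 0
    + (X 1 * X 0 * X 1 * X 1) * hA 1 0 1 1

private lemma szabo_det_eq_zero (Γ : Fin 2 → Fin 2 → Fin 2 → (Fin 2 → ℝ) → ℝ)
    (p X : Fin 2 → ℝ) : (szabo Γ p X).det = 0 := by
  by_cases hX : X = 0
  · subst hX
    have h0 : szabo Γ p 0 = 0 := by
      funext l i
      simp [szabo]
    simp [h0]
  · exact Matrix.exists_mulVec_eq_zero_iff.mp ⟨X, hX, szabo_mulVec Γ p X⟩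

private lemma trace_szabo (Γ : Fin 2 → Fin 2 → Fin 2 → (Fin 2 → ℝ) → ℝ)
    (p : Fin 2 → ℝ) (hder : ∀ l i j k : Fin 2, DifferentiableAt ℝ (curv Γ l i j k) p)
    (X : Fin 2 → ℝ) :
    (szabo Γ p X).trace = ∑ h, ∑ j, ∑ k, X h * X j * X k * covRic Γ h j k p := by
  have key : ∀ h j k : Fin 2,
      covR Γ h 0 0 j k p + covR Γ h 1 1 j k p = covRic Γ h j k p := by
    intro h j k
    have hric : ricci Γ j k = fun q => curv Γ 0 0 j k q + curv Γ 1 1 j k q := by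
      funext q
      simp [ricci, Fin.sum_univ_two]
    have hpd : pd h (ricci Γ j k) p = pd h (curv Γ 0 0 j k) p + pd h (curv Γ 1 1 j k) p := by
      unfold pd
      rw [hric, fderiv_fun_add (hder 0 0 j k) (hder 1 1 j k)]
      simp
    simp only [covR, covRic, Fin.sum_univ_two]
    rw [hpd]
    simp only [ricci, Fin.sum_univ_two]
    ring
  simp only [Matrix.trace_fin_two, szabo, Matrix.of_apply, Fin.sum_univ_two]
  linear_combination
      (X 0 * X 0 * X 0) * key 0 0 0 + (X 0 * X 0 * X 1) * key 0 0 1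
    + (X 0 * X 1 * X 0) * key 0 1 0 + (X 0 * X 1 * X 1) * key 0 1 1
    + (X 1 * X 0 * X 0) * key 1 0 0 + (X 1 * X 0 * X 1) * key 1 0 1
    + (X 1 * X 1 * X 0) * key 1 1 0 + (X 1 * X 1 * X 1) * key 1 1 1

end AuxProof

/-- a torsion-free affine connection on an open set `U ⊆ ℝ²` with smooth
Christoffel symbols is affine Szabó at `p ∈ U` (the characteristic polynomial of the affine
Szabó operator `S(X)` is `λ²` for every `X`) if and only if its Ricci tensor is cyclic
parallel at `p` (i.e. `(U,∇)` is an `L₃`-space at `p`). -/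
theorem stmt_2 (U : Set (Fin 2 → ℝ)) (hU : IsOpen U)
    (Γ : Fin 2 → Fin 2 → Fin 2 → (Fin 2 → ℝ) → ℝ)
    (hsmooth : ∀ k i j, ContDiffOn ℝ (⊤ : ℕ∞) (Γ k i j) U)
    (hsym : ∀ k i j, Γ k i j = Γ k j i)
    (p : Fin 2 → ℝ) (hp : p ∈ U) :
    (∀ X : Fin 2 → ℝ, (szabo Γ p X).charpoly = Polynomial.X ^ 2) ↔
      CyclicParallelAt Γ p := by
  have hpdC : ∀ f : (Fin 2 → ℝ) → ℝ, ContDiffOn ℝ (⊤ : ℕ∞) f U →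
      ∀ i : Fin 2, ContDiffAt ℝ (⊤ : ℕ∞) (pd i f) p := by
    intro f hf i
    have h1 : ContDiffAt ℝ (⊤ : ℕ∞) f p := hf.contDiffAt (hU.mem_nhds hp)
    exact (h1.fderiv_right (by exact_mod_cast le_top)).clm_apply contDiffAt_const
  have hΓ : ∀ a b c : Fin 2, DifferentiableAt ℝ (Γ a b c) p := fun a b c =>
    ((hsmooth a b c).contDiffAt (hU.mem_nhds hp)).differentiableAt (by simp)
  have hder : ∀ l i j k : Fin 2, DifferentiableAt ℝ (curv Γ l i j k) p := by
    intro l i j k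
    unfold curv
    have h1 := (hpdC _ (hsmooth l j k) i).differentiableAt (by simp)
    have h2 := (hpdC _ (hsmooth l i k) j).differentiableAt (by simp)
    exact (h1.sub h2).add (DifferentiableAt.fun_sum fun m _ =>
      ((hΓ l i m).mul (hΓ m j k)).sub ((hΓ l j m).mul (hΓ m i k)))
  have htr := trace_szabo Γ p hder
  have hdet := szabo_det_eq_zero Γ p
  constructor
  · intro h
    have htr0 : ∀ X : Fin 2 → ℝ,
        ∑ a, ∑ b, ∑ c, X a * X b * X c * covRic Γ a b c p = 0 := by
      intro X
      have h1 := h X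
      rw [my_charpoly_fin_two, hdet X] at h1
      have h2 := congrArg (fun q => Polynomial.coeff q 1) h1
      simp [Polynomial.coeff_X_pow] at h2
      rw [← htr X, h2]
    have e1 := htr0 ![1, 0]
    have e2 := htr0 ![0, 1]
    have e3 := htr0 ![1, 1]
    have e4 := htr0 ![1, -1]
    simp [Fin.sum_univ_two] at e1 e2 e3 e4
    intro i j k
    have h2 : ∀ a : Fin 2, a = 0 ∨ a = 1 := by decide
    rcases h2 i with rfl | rfl <;> rcases h2 j with rfl | rfl <;>
      rcases h2 k with rfl | rfl <;> linarith [e1, e2, e3, e4]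
  · intro hc X
    have htr0 : (szabo Γ p X).trace = 0 := by
      rw [htr X]
      simp only [Fin.sum_univ_two]
      linear_combination (X 0 ^ 3 / 3) * hc 0 0 0 + (X 0 ^ 2 * X 1) * hc 0 0 1
        + (X 0 * X 1 ^ 2) * hc 0 1 1 + (X 1 ^ 3 / 3) * hc 1 1 1
    rw [my_charpoly_fin_two, hdet X, htr0]
    simp
end

section
/- Let ∇ be the torsion-free affine connection on ℝ³ whose only nonzero Christoffel symbols are Γ²₁₁ = u₁u₃, Γ²₃₃ = u₁ + u₃ (and Γ²₂₂ = 0). Then ∇ is affine Szabó: at every point p ∈ ℝ³ the characteristic polynomial of the affine Szabó operator S(X) equals λ³ for every X ∈ ℝ³. -/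
open scoped BigOperators

/-- The torsion-free connection on `ℝ³` whose only nonzero Christoffel symbols are
`Γ²₁₁ = u₁u₃` and `Γ²₃₃ = u₁ + u₃`. -/
def gammaEx : Fin 3 → Fin 3 → Fin 3 → (Fin 3 → ℝ) → ℝ :=
  fun k i j =>
    if k = 1 ∧ i = 0 ∧ j = 0 then (fun u => u 0 * u 2)
    else if k = 1 ∧ i = 2 ∧ j = 2 then (fun u => u 0 + u 2)
    else 0


section Aux

lemma hproj (j : Fin 3) (p : Fin 3 → ℝ) :
    HasFDerivAt (fun u : Fin 3 → ℝ => u j)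
      (ContinuousLinearMap.proj j : (Fin 3 → ℝ) →L[ℝ] ℝ) p :=
  (ContinuousLinearMap.proj j : (Fin 3 → ℝ) →L[ℝ] ℝ).hasFDerivAt

lemma pd_coord (i j : Fin 3) (p : Fin 3 → ℝ) :
    pd i (fun u => u j) p = if j = i then 1 else 0 := by
  rw [pd, (hproj j p).fderiv]
  simp [Pi.single_apply]

lemma pd_neg_coord (i j : Fin 3) (p : Fin 3 → ℝ) :
    pd i (fun u => -u j) p = if j = i then -1 else 0 := by
  rw [pd, ((hproj j p).fun_neg).fderiv]
  simp only [ContinuousLinearMap.neg_apply, ContinuousLinearMap.proj_apply, Pi.single_apply]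
  split <;> simp

lemma pd_const (i : Fin 3) (c : ℝ) (p : Fin 3 → ℝ) : pd i (fun _ => c) p = 0 := by
  simp [pd]

lemma pd_zero (i : Fin 3) (p : Fin 3 → ℝ) : pd i (0 : (Fin 3 → ℝ) → ℝ) p = 0 := by
  rw [show (0 : (Fin 3 → ℝ) → ℝ) = fun _ => (0:ℝ) from rfl]
  simp [pd]

lemma pd_mul02 (i : Fin 3) (p : Fin 3 → ℝ) :
    pd i (fun u => u 0 * u 2) p
      = p 0 * (if (2:Fin 3) = i then 1 else 0) + p 2 * (if (0:Fin 3) = i then 1 else 0) := by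
  rw [pd, ((hproj 0 p).fun_mul (hproj 2 p)).fderiv]
  simp [Pi.single_apply]

lemma pd_add02 (i : Fin 3) (p : Fin 3 → ℝ) :
    pd i (fun u => u 0 + u 2) p
      = (if (0:Fin 3) = i then 1 else 0) + (if (2:Fin 3) = i then 1 else 0) := by
  rw [pd, ((hproj 0 p).fun_add (hproj 2 p)).fderiv]
  simp [Pi.single_apply]

/-- Explicit values of the curvature of `gammaEx`. -/
noncomputable def curvVal : Fin 3 → Fin 3 → Fin 3 → Fin 3 → (Fin 3 → ℝ) → ℝ :=
  fun l i j k =>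
    if l = 1 ∧ i = 0 ∧ j = 2 ∧ k = 0 then fun p => -p 0
    else if l = 1 ∧ i = 0 ∧ j = 2 ∧ k = 2 then fun _ => 1
    else if l = 1 ∧ i = 2 ∧ j = 0 ∧ k = 0 then fun p => p 0
    else if l = 1 ∧ i = 2 ∧ j = 0 ∧ k = 2 then fun _ => -1
    else 0

lemma curv_eq : curv gammaEx = curvVal := by
  funext l i j k p
  fin_cases l <;> fin_cases i <;> fin_cases j <;> fin_cases k <;>
    simp [curv, curvVal, gammaEx, Fin.sum_univ_three, pd_coord, pd_mul02, pd_add02,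
      pd_const, pd_zero]

set_option maxHeartbeats 1000000 in
lemma pd_curvVal (h l i j k : Fin 3) (p : Fin 3 → ℝ) :
    pd h (curvVal l i j k) p =
      if h = 0 ∧ l = 1 ∧ i = 0 ∧ j = 2 ∧ k = 0 then -1
      else if h = 0 ∧ l = 1 ∧ i = 2 ∧ j = 0 ∧ k = 0 then 1
      else 0 := by
  fin_cases h <;> fin_cases l <;> fin_cases i <;> fin_cases j <;> fin_cases k <;>
    simp [curvVal, pd_coord, pd_neg_coord, pd_const, pd_zero]

set_option maxHeartbeats 2000000 in
lemma covR_val (h l i j k : Fin 3) (p : Fin 3 → ℝ) :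
    covR gammaEx h l i j k p =
      if h = 0 ∧ l = 1 ∧ i = 0 ∧ j = 2 ∧ k = 0 then -1
      else if h = 0 ∧ l = 1 ∧ i = 2 ∧ j = 0 ∧ k = 0 then 1
      else 0 := by
  fin_cases h <;> fin_cases l <;> fin_cases i <;> fin_cases j <;> fin_cases k <;>
    (simp only [covR, curv_eq, pd_curvVal, Fin.sum_univ_three];
     simp [curvVal, gammaEx])

end Aux

/-- the connection with `Γ²₁₁ = u₁u₃`, `Γ²₃₃ = u₁ + u₃` is affine Szabó: at
every point the characteristic polynomial of the affine Szabó operator `S(X)` is `λ³` for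
every `X ∈ ℝ³`. -/
theorem stmt_6 :
    ∀ (p : Fin 3 → ℝ) (X : Fin 3 → ℝ),
      (szabo gammaEx p X).charpoly = Polynomial.X ^ 3 := by
  intro p X
  have hM : szabo gammaEx p X =
      Matrix.of (fun l i => if l = 1 ∧ i = 0 then -(X 0 * X 2 * X 0)
        else if l = 1 ∧ i = 2 then X 0 * X 0 * X 0 else 0) := by
    ext l i
    fin_cases l <;> fin_cases i <;>
      simp [szabo, covR_val, Fin.sum_univ_three]
  rw [hM, Matrix.charpoly, Matrix.det_fin_three]
  simp [Matrix.charmatrix_apply_eq, Matrix.charmatrix_apply_ne]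
  ring
end

section
/- Let g be the pseudo-Riemannian metric on ℝ⁶ given by g = 2du₁⊗du₄ + 2du₂⊗du₅ + 2du₃⊗du₆ − 2u₁u₃u₅ du₁⊗du₁ − 2(u₁+u₃)u₅ du₃⊗du₃. Then g is not locally symmetric: the covariant derivative of its curvature tensor satisfies g((∇_{∂₁}R)(∂₁,∂₃)∂₅, ∂₁) = 1 at every point, so ∇R ≠ 0. -/
open scoped BigOperators

/-- The pseudo-Riemannian metric on `ℝ⁶`:
`g = 2du₁⊗du₄ + 2du₂⊗du₅ + 2du₃⊗du₆ − 2u₁u₃u₅ du₁⊗du₁ − 2(u₁+u₃)u₅ du₃⊗du₃`. -/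
def gSix : (Fin 6 → ℝ) → Matrix (Fin 6) (Fin 6) ℝ :=
  fun u =>
    !![-2 * u 0 * u 2 * u 4, 0, 0, 1, 0, 0;
       0, 0, 0, 0, 1, 0;
       0, 0, -2 * (u 0 + u 2) * u 4, 0, 0, 1;
       1, 0, 0, 0, 0, 0;
       0, 1, 0, 0, 0, 0;
       0, 0, 1, 0, 0, 0]


namespace Stmt12

abbrev prj (j : Fin 6) : (Fin 6 → ℝ) →L[ℝ] ℝ :=
  ContinuousLinearMap.proj (R := ℝ) (φ := fun _ : Fin 6 => ℝ) j

lemma hasFD_coord (j : Fin 6) (p : Fin 6 → ℝ) :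
    HasFDerivAt (fun q : Fin 6 → ℝ => q j) (prj j) p :=
  (prj j).hasFDerivAt

lemma pd_const (i : Fin 6) (c : ℝ) (p : Fin 6 → ℝ) : pd i (fun _ => c) p = 0 := by
  simp [pd]

lemma pd_coord (i j : Fin 6) (p : Fin 6 → ℝ) :
    pd i (fun q => q j) p = if j = i then 1 else 0 := by
  rw [pd, (hasFD_coord j p).fderiv]; simp [Pi.single_apply]

lemma pd_coord_mul (i j k : Fin 6) (p : Fin 6 → ℝ) :
    pd i (fun q => q j * q k) p =
      (if j = i then 1 else 0) * p k + p j * (if k = i then 1 else 0) := by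
  rw [pd, ((hasFD_coord j p).fun_mul (hasFD_coord k p)).fderiv]
  simp [Pi.single_apply]; split_ifs <;> ring

lemma pd_coord_add (i j k : Fin 6) (p : Fin 6 → ℝ) :
    pd i (fun q => q j + q k) p =
      (if j = i then 1 else 0) + (if k = i then 1 else 0) := by
  rw [pd, ((hasFD_coord j p).fun_add (hasFD_coord k p)).fderiv]
  simp [Pi.single_apply]

lemma pd_neg (i : Fin 6) (f : (Fin 6 → ℝ) → ℝ) (p : Fin 6 → ℝ) :
    pd i (fun q => -(f q)) p = -(pd i f p) := by
  simp [pd, fderiv_neg]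

lemma pd_g00 (i : Fin 6) (p : Fin 6 → ℝ) :
    pd i (fun q : Fin 6 → ℝ => -2 * q 0 * q 2 * q 4) p =
      (-2 * p 0 * p 2) * (if (4:Fin 6) = i then 1 else 0)
        + p 4 * ((-2 * p 0) * (if (2:Fin 6) = i then 1 else 0)
          + p 2 * (-2 * (if (0:Fin 6) = i then 1 else 0))) := by
  have h1 : HasFDerivAt (fun q : Fin 6 → ℝ => -2 * q 0)
      ((-2:ℝ) • prj 0) p := (hasFD_coord 0 p).const_mul (-2)
  have h3 := (h1.fun_mul (hasFD_coord 2 p)).fun_mul (hasFD_coord 4 p)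
  rw [pd, h3.fderiv]
  simp [Pi.single_apply]; split_ifs <;> ring

lemma pd_g22 (i : Fin 6) (p : Fin 6 → ℝ) :
    pd i (fun q : Fin 6 → ℝ => -2 * (q 0 + q 2) * q 4) p =
      (-2 * (p 0 + p 2)) * (if (4:Fin 6) = i then 1 else 0)
        + p 4 * (-2 * ((if (0:Fin 6) = i then 1 else 0) + (if (2:Fin 6) = i then 1 else 0))) := by
  have h1 : HasFDerivAt (fun q : Fin 6 → ℝ => -2 * (q 0 + q 2))
      ((-2:ℝ) • (prj 0 + prj 2)) p := ((hasFD_coord 0 p).add (hasFD_coord 2 p)).const_mul (-2)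
  have h2 := h1.fun_mul (hasFD_coord 4 p)
  rw [pd, h2.fderiv]
  simp [Pi.single_apply]; split_ifs <;> ring

def gSixInv : (Fin 6 → ℝ) → Matrix (Fin 6) (Fin 6) ℝ :=
  fun u =>
    !![0, 0, 0, 1, 0, 0;
       0, 0, 0, 0, 1, 0;
       0, 0, 0, 0, 0, 1;
       1, 0, 0, 2 * u 0 * u 2 * u 4, 0, 0;
       0, 1, 0, 0, 0, 0;
       0, 0, 1, 0, 0, 2 * (u 0 + u 2) * u 4]

lemma cons_val_five {α : Type*} (x : α) (u : Fin 5 → α) : Matrix.vecCons x u 5 = u 4 := rfl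

lemma gSix_inv (u : Fin 6 → ℝ) : (gSix u)⁻¹ = gSixInv u := by
  apply Matrix.inv_eq_right_inv
  ext i j
  fin_cases i <;> fin_cases j <;>
    simp [gSix, gSixInv, Matrix.mul_apply, Fin.sum_univ_six, Matrix.one_apply,
      Matrix.cons_val_zero, Matrix.cons_val_one, Matrix.head_cons, Matrix.cons_val_two,
      Matrix.cons_val_three, Matrix.cons_val_four, cons_val_five, Matrix.vecHead, Matrix.vecTail]

lemma ge_0_0 (u : Fin 6 → ℝ) : gSix u 0 0 = -2 * u 0 * u 2 * u 4 := rfl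
lemma gi_0_0 (u : Fin 6 → ℝ) : gSixInv u 0 0 = 0 := rfl
lemma ge_0_1 (u : Fin 6 → ℝ) : gSix u 0 1 = 0 := rfl
lemma gi_0_1 (u : Fin 6 → ℝ) : gSixInv u 0 1 = 0 := rfl
lemma ge_0_2 (u : Fin 6 → ℝ) : gSix u 0 2 = 0 := rfl
lemma gi_0_2 (u : Fin 6 → ℝ) : gSixInv u 0 2 = 0 := rfl
lemma ge_0_3 (u : Fin 6 → ℝ) : gSix u 0 3 = 1 := rfl
lemma gi_0_3 (u : Fin 6 → ℝ) : gSixInv u 0 3 = 1 := rfl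
lemma ge_0_4 (u : Fin 6 → ℝ) : gSix u 0 4 = 0 := rfl
lemma gi_0_4 (u : Fin 6 → ℝ) : gSixInv u 0 4 = 0 := rfl
lemma ge_0_5 (u : Fin 6 → ℝ) : gSix u 0 5 = 0 := rfl
lemma gi_0_5 (u : Fin 6 → ℝ) : gSixInv u 0 5 = 0 := rfl
lemma ge_1_0 (u : Fin 6 → ℝ) : gSix u 1 0 = 0 := rfl
lemma gi_1_0 (u : Fin 6 → ℝ) : gSixInv u 1 0 = 0 := rfl
lemma ge_1_1 (u : Fin 6 → ℝ) : gSix u 1 1 = 0 := rfl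
lemma gi_1_1 (u : Fin 6 → ℝ) : gSixInv u 1 1 = 0 := rfl
lemma ge_1_2 (u : Fin 6 → ℝ) : gSix u 1 2 = 0 := rfl
lemma gi_1_2 (u : Fin 6 → ℝ) : gSixInv u 1 2 = 0 := rfl
lemma ge_1_3 (u : Fin 6 → ℝ) : gSix u 1 3 = 0 := rfl
lemma gi_1_3 (u : Fin 6 → ℝ) : gSixInv u 1 3 = 0 := rfl
lemma ge_1_4 (u : Fin 6 → ℝ) : gSix u 1 4 = 1 := rfl
lemma gi_1_4 (u : Fin 6 → ℝ) : gSixInv u 1 4 = 1 := rfl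
lemma ge_1_5 (u : Fin 6 → ℝ) : gSix u 1 5 = 0 := rfl
lemma gi_1_5 (u : Fin 6 → ℝ) : gSixInv u 1 5 = 0 := rfl
lemma ge_2_0 (u : Fin 6 → ℝ) : gSix u 2 0 = 0 := rfl
lemma gi_2_0 (u : Fin 6 → ℝ) : gSixInv u 2 0 = 0 := rfl
lemma ge_2_1 (u : Fin 6 → ℝ) : gSix u 2 1 = 0 := rfl
lemma gi_2_1 (u : Fin 6 → ℝ) : gSixInv u 2 1 = 0 := rfl
lemma ge_2_2 (u : Fin 6 → ℝ) : gSix u 2 2 = -2 * (u 0 + u 2) * u 4 := rfl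
lemma gi_2_2 (u : Fin 6 → ℝ) : gSixInv u 2 2 = 0 := rfl
lemma ge_2_3 (u : Fin 6 → ℝ) : gSix u 2 3 = 0 := rfl
lemma gi_2_3 (u : Fin 6 → ℝ) : gSixInv u 2 3 = 0 := rfl
lemma ge_2_4 (u : Fin 6 → ℝ) : gSix u 2 4 = 0 := rfl
lemma gi_2_4 (u : Fin 6 → ℝ) : gSixInv u 2 4 = 0 := rfl
lemma ge_2_5 (u : Fin 6 → ℝ) : gSix u 2 5 = 1 := rfl
lemma gi_2_5 (u : Fin 6 → ℝ) : gSixInv u 2 5 = 1 := rfl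
lemma ge_3_0 (u : Fin 6 → ℝ) : gSix u 3 0 = 1 := rfl
lemma gi_3_0 (u : Fin 6 → ℝ) : gSixInv u 3 0 = 1 := rfl
lemma ge_3_1 (u : Fin 6 → ℝ) : gSix u 3 1 = 0 := rfl
lemma gi_3_1 (u : Fin 6 → ℝ) : gSixInv u 3 1 = 0 := rfl
lemma ge_3_2 (u : Fin 6 → ℝ) : gSix u 3 2 = 0 := rfl
lemma gi_3_2 (u : Fin 6 → ℝ) : gSixInv u 3 2 = 0 := rfl
lemma ge_3_3 (u : Fin 6 → ℝ) : gSix u 3 3 = 0 := rfl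
lemma gi_3_3 (u : Fin 6 → ℝ) : gSixInv u 3 3 = 2 * u 0 * u 2 * u 4 := rfl
lemma ge_3_4 (u : Fin 6 → ℝ) : gSix u 3 4 = 0 := rfl
lemma gi_3_4 (u : Fin 6 → ℝ) : gSixInv u 3 4 = 0 := rfl
lemma ge_3_5 (u : Fin 6 → ℝ) : gSix u 3 5 = 0 := rfl
lemma gi_3_5 (u : Fin 6 → ℝ) : gSixInv u 3 5 = 0 := rfl
lemma ge_4_0 (u : Fin 6 → ℝ) : gSix u 4 0 = 0 := rfl
lemma gi_4_0 (u : Fin 6 → ℝ) : gSixInv u 4 0 = 0 := rfl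
lemma ge_4_1 (u : Fin 6 → ℝ) : gSix u 4 1 = 1 := rfl
lemma gi_4_1 (u : Fin 6 → ℝ) : gSixInv u 4 1 = 1 := rfl
lemma ge_4_2 (u : Fin 6 → ℝ) : gSix u 4 2 = 0 := rfl
lemma gi_4_2 (u : Fin 6 → ℝ) : gSixInv u 4 2 = 0 := rfl
lemma ge_4_3 (u : Fin 6 → ℝ) : gSix u 4 3 = 0 := rfl
lemma gi_4_3 (u : Fin 6 → ℝ) : gSixInv u 4 3 = 0 := rfl
lemma ge_4_4 (u : Fin 6 → ℝ) : gSix u 4 4 = 0 := rfl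
lemma gi_4_4 (u : Fin 6 → ℝ) : gSixInv u 4 4 = 0 := rfl
lemma ge_4_5 (u : Fin 6 → ℝ) : gSix u 4 5 = 0 := rfl
lemma gi_4_5 (u : Fin 6 → ℝ) : gSixInv u 4 5 = 0 := rfl
lemma ge_5_0 (u : Fin 6 → ℝ) : gSix u 5 0 = 0 := rfl
lemma gi_5_0 (u : Fin 6 → ℝ) : gSixInv u 5 0 = 0 := rfl
lemma ge_5_1 (u : Fin 6 → ℝ) : gSix u 5 1 = 0 := rfl
lemma gi_5_1 (u : Fin 6 → ℝ) : gSixInv u 5 1 = 0 := rfl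
lemma ge_5_2 (u : Fin 6 → ℝ) : gSix u 5 2 = 1 := rfl
lemma gi_5_2 (u : Fin 6 → ℝ) : gSixInv u 5 2 = 1 := rfl
lemma ge_5_3 (u : Fin 6 → ℝ) : gSix u 5 3 = 0 := rfl
lemma gi_5_3 (u : Fin 6 → ℝ) : gSixInv u 5 3 = 0 := rfl
lemma ge_5_4 (u : Fin 6 → ℝ) : gSix u 5 4 = 0 := rfl
lemma gi_5_4 (u : Fin 6 → ℝ) : gSixInv u 5 4 = 0 := rfl
lemma ge_5_5 (u : Fin 6 → ℝ) : gSix u 5 5 = 0 := rfl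
lemma gi_5_5 (u : Fin 6 → ℝ) : gSixInv u 5 5 = 2 * (u 0 + u 2) * u 4 := rfl


/-- The explicit Christoffel symbols of `gSix`. -/
def Γfun (c a b : Fin 6) : (Fin 6 → ℝ) → ℝ := fun u =>
  if c = 1 then
    (if a = 0 ∧ b = 0 then u 0 * u 2 else if a = 2 ∧ b = 2 then u 0 + u 2 else 0)
  else if c = 3 then
    (if a = 0 ∧ b = 0 then -(u 2 * u 4)
     else if (a = 0 ∧ b = 2) ∨ (a = 2 ∧ b = 0) then -(u 0 * u 4)
     else if (a = 0 ∧ b = 4) ∨ (a = 4 ∧ b = 0) then -(u 0 * u 2)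
     else if a = 2 ∧ b = 2 then u 4 else 0)
  else if c = 5 then
    (if a = 0 ∧ b = 0 then u 0 * u 4
     else if (a = 0 ∧ b = 2) ∨ (a = 2 ∧ b = 0) then -(u 4)
     else if a = 2 ∧ b = 2 then -(u 4)
     else if (a = 2 ∧ b = 4) ∨ (a = 4 ∧ b = 2) then -(u 0 + u 2)
     else 0)
  else 0

lemma fin6_cases (c : Fin 6) : c = 0 ∨ c = 1 ∨ c = 2 ∨ c = 3 ∨ c = 4 ∨ c = 5 := by
  fin_cases c <;> simp

set_option maxHeartbeats 2000000 in
lemma christoffel_eq : christoffel gSix = Γfun := by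
  funext c a b u
  rcases fin6_cases c with rfl|rfl|rfl|rfl|rfl|rfl <;>
  rcases fin6_cases a with rfl|rfl|rfl|rfl|rfl|rfl <;>
  rcases fin6_cases b with rfl|rfl|rfl|rfl|rfl|rfl <;>
    (simp only [christoffel, gSix_inv, Fin.sum_univ_six, ge_0_0, gi_0_0, ge_0_1, gi_0_1, ge_0_2, gi_0_2, ge_0_3, gi_0_3, ge_0_4, gi_0_4, ge_0_5, gi_0_5, ge_1_0, gi_1_0, ge_1_1, gi_1_1, ge_1_2, gi_1_2, ge_1_3, gi_1_3, ge_1_4, gi_1_4, ge_1_5, gi_1_5, ge_2_0, gi_2_0, ge_2_1, gi_2_1, ge_2_2, gi_2_2, ge_2_3, gi_2_3, ge_2_4, gi_2_4, ge_2_5, gi_2_5, ge_3_0, gi_3_0, ge_3_1, gi_3_1, ge_3_2, gi_3_2, ge_3_3, gi_3_3, ge_3_4, gi_3_4, ge_3_5, gi_3_5, ge_4_0, gi_4_0, ge_4_1, gi_4_1, ge_4_2, gi_4_2, ge_4_3, gi_4_3, ge_4_4, gi_4_4, ge_4_5, gi_4_5, ge_5_0, gi_5_0, ge_5_1, gi_5_1,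 ge_5_2, gi_5_2, ge_5_3, gi_5_3, ge_5_4, gi_5_4, ge_5_5, gi_5_5];
     simp only [pd_const, pd_g00, pd_g22];
     simp [Γfun];
     try ring)

lemma Γfun_even0 (a b : Fin 6) : Γfun 0 a b = fun _ => 0 := by funext u; simp [Γfun]
lemma Γfun_even2 (a b : Fin 6) : Γfun 2 a b = fun _ => 0 := by funext u; simp [Γfun]
lemma Γfun_even4 (a b : Fin 6) : Γfun 4 a b = fun _ => 0 := by funext u; simp [Γfun]

lemma curv_even0 (i j k : Fin 6) : curv Γfun 0 i j k = fun _ => 0 := by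
  funext p; simp [curv, Γfun_even0, pd_const, Fin.sum_univ_six]
lemma curv_even2 (i j k : Fin 6) : curv Γfun 2 i j k = fun _ => 0 := by
  funext p; simp [curv, Γfun_even2, pd_const, Fin.sum_univ_six]
lemma curv_even4 (i j k : Fin 6) : curv Γfun 4 i j k = fun _ => 0 := by
  funext p; simp [curv, Γfun_even4, pd_const, Fin.sum_univ_six]


lemma Γf_324 : Γfun 3 2 4 = fun _ => 0 := by funext u; simp [Γfun]
lemma Γf_304 : Γfun 3 0 4 = fun u => -(u 0 * u 2) := by funext u; simp [Γfun]
lemma Γf_314 : Γfun 3 1 4 = fun _ => 0 := by funext u; simp [Γfun]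
lemma Γf_334 : Γfun 3 3 4 = fun _ => 0 := by funext u; simp [Γfun]
lemma Γf_354 : Γfun 3 5 4 = fun _ => 0 := by funext u; simp [Γfun]
lemma Γf_323 : Γfun 3 2 3 = fun _ => 0 := by funext u; simp [Γfun]
lemma Γf_303 : Γfun 3 0 3 = fun _ => 0 := by funext u; simp [Γfun]

lemma curv3_024 : curv Γfun 3 0 2 4 = fun u => u 0 := by
  funext p
  simp only [curv, Fin.sum_univ_six]
  simp [Γfun, Γf_324, Γf_304, Γf_314, Γf_334, Γf_354, Γf_323, Γf_303, pd_const, pd_coord, pd_coord_mul, pd_coord_add, pd_neg]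

lemma curvz_124 (p : Fin 6 → ℝ) : curv Γfun 3 1 2 4 p = 0 := by
  simp only [curv, Fin.sum_univ_six]
  simp [Γfun, Γf_324, Γf_304, Γf_314, Γf_334, Γf_354, Γf_323, Γf_303, pd_const, pd_coord, pd_coord_mul, pd_coord_add, pd_neg]
lemma curvz_324 (p : Fin 6 → ℝ) : curv Γfun 3 3 2 4 p = 0 := by
  simp only [curv, Fin.sum_univ_six]
  simp [Γfun, Γf_324, Γf_304, Γf_314, Γf_334, Γf_354, Γf_323, Γf_303, pd_const, pd_coord, pd_coord_mul, pd_coord_add, pd_neg]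
lemma curvz_524 (p : Fin 6 → ℝ) : curv Γfun 3 5 2 4 p = 0 := by
  simp only [curv, Fin.sum_univ_six]
  simp [Γfun, Γf_324, Γf_304, Γf_314, Γf_334, Γf_354, Γf_323, Γf_303, pd_const, pd_coord, pd_coord_mul, pd_coord_add, pd_neg]
lemma curvz_034 (p : Fin 6 → ℝ) : curv Γfun 3 0 3 4 p = 0 := by
  simp only [curv, Fin.sum_univ_six]
  simp [Γfun, Γf_324, Γf_304, Γf_314, Γf_334, Γf_354, Γf_323, Γf_303, pd_const, pd_coord, pd_coord_mul, pd_coord_add, pd_neg]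
lemma curvz_054 (p : Fin 6 → ℝ) : curv Γfun 3 0 5 4 p = 0 := by
  simp only [curv, Fin.sum_univ_six]
  simp [Γfun, Γf_324, Γf_304, Γf_314, Γf_334, Γf_354, Γf_323, Γf_303, pd_const, pd_coord, pd_coord_mul, pd_coord_add, pd_neg]
lemma curvz_023 (p : Fin 6 → ℝ) : curv Γfun 3 0 2 3 p = 0 := by
  simp only [curv, Fin.sum_univ_six]
  simp [Γfun, Γf_324, Γf_304, Γf_314, Γf_334, Γf_354, Γf_323, Γf_303, pd_const, pd_coord, pd_coord_mul, pd_coord_add, pd_neg]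

lemma covR_main (u : Fin 6 → ℝ) : covR Γfun 0 3 0 2 4 u = 1 := by
  simp only [covR, Fin.sum_univ_six, curv3_024, curv_even0, curv_even2, curv_even4,
    curvz_124, curvz_324, curvz_524, curvz_034, curvz_054, curvz_023]
  simp [Γfun, pd_coord, pd_const]

lemma covR_zero (u : Fin 6 → ℝ) : covR Γfun 0 0 0 2 4 u = 0 := by
  simp only [covR, Fin.sum_univ_six, curv_even0, curv_even2, curv_even4]
  simp [Γfun, pd_const]

lemma part1 (u : Fin 6 → ℝ) :
    (∑ d, covR (christoffel gSix) 0 d 0 2 4 u * gSix u d 0) = 1 := by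
  rw [christoffel_eq]
  simp only [Fin.sum_univ_six, ge_0_0, ge_1_0, ge_2_0, ge_3_0, ge_4_0, ge_5_0,
    covR_main, covR_zero]
  ring

end Stmt12

/-- `gSix` is not locally symmetric: the covariant derivative of its
curvature tensor satisfies `g((∇_{∂₁}R)(∂₁,∂₃)∂₅, ∂₁) = 1` at every point, hence `∇R ≠ 0`. -/
theorem stmt_12 :
    (∀ u : Fin 6 → ℝ,
      (∑ d, covR (christoffel gSix) 0 d 0 2 4 u * gSix u d 0) = 1) ∧
    ¬ (∀ (u : Fin 6 → ℝ) (h l i j k : Fin 6), covR (christoffel gSix) h l i j k u = 0) := by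
  refine ⟨Stmt12.part1, fun h => ?_⟩
  have h1 := Stmt12.part1 (fun _ => 0)
  simp [h, Fin.sum_univ_six] at h1
end
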